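/- arXiv:2502.16293 — 2 statements merged into one kernel-verified Lean document; each statement's English description precedes it below -/
import Mathlib

section
/- Let P = P^j − P^i be the Minkowski difference of two nonempty compact convex sets, and let A^i_k be an outer normal of a facet-defining halfspace P^i_k ⊇ P^i with h_{P^i}(A^i_k) = b^i_k. Then the support halfspace of P in direction −A^i_k satisfies H^−_P(−A^i_k) = P^j − P^i_k, where H^−_P(a) := {ω : a^⊤ω ≤ h_P(a)}. -/
open Pointwise
open scoped RealInnerProductSpace

theorem support_halfspace_eq_minkowski_diff {n : ℕ}
    (Pi Pj : Set (EuclideanSpace ℝ (Fin n)))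
    (hni : Pi.Nonempty) (hnj : Pj.Nonempty)
    (hki : IsCompact Pi) (hkj : IsCompact Pj)
    (hci : Convex ℝ Pi) (hcj : Convex ℝ Pj)
    (Aik : EuclideanSpace ℝ (Fin n)) (bik : ℝ)
    (hA : ‖Aik‖ = 1) (hb : bik = sSup ((fun ω => ⟪Aik, ω⟫) '' Pi)) :
    {ω : EuclideanSpace ℝ (Fin n) |
        ⟪-Aik, ω⟫ ≤ sSup ((fun ω' => ⟪-Aik, ω'⟫) '' (Pj - Pi))} =
      Pj - {z : EuclideanSpace ℝ (Fin n) | ⟪Aik, z⟫ ≤ bik} := by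
  have hfc : Continuous fun x : EuclideanSpace ℝ (Fin n) => ⟪Aik, x⟫ :=
    continuous_const.inner continuous_id
  obtain ⟨x0, hx0, hx0max⟩ := hki.exists_isMaxOn hni hfc.continuousOn
  obtain ⟨y0, hy0, hy0min⟩ := hkj.exists_isMinOn hnj hfc.continuousOn
  have hb' : bik = ⟪Aik, x0⟫ := by
    rw [hb]
    exact IsGreatest.csSup_eq ⟨⟨x0, hx0, rfl⟩, by rintro a ⟨x, hx, rfl⟩; exact hx0max hx⟩
  have hsup : sSup ((fun ω' => ⟪-Aik, ω'⟫) '' (Pj - Pi)) = bik - ⟪Aik, y0⟫ := by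
    apply IsGreatest.csSup_eq
    constructor
    · refine ⟨y0 - x0, ⟨y0, hy0, x0, hx0, rfl⟩, ?_⟩
      simp only [inner_neg_left, inner_sub_right, hb']
      ring
    · rintro a ⟨w, ⟨y, hy, x, hx, rfl⟩, rfl⟩
      have h1 : ⟪Aik, x⟫ ≤ bik := hb' ▸ hx0max hx
      have h2 : ⟪Aik, y0⟫ ≤ ⟪Aik, y⟫ := hy0min hy
      simp only [inner_neg_left, inner_sub_right]
      linarith
  ext ω
  simp only [Set.mem_setOf_eq, hsup, Set.mem_sub]
  simp only [inner_neg_left]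
  constructor
  · intro h
    refine ⟨y0, hy0, y0 - ω, ?_, by abel⟩
    simp only [Set.mem_setOf_eq, inner_sub_right]
    linarith
  · rintro ⟨y, hy, z, hz, rfl⟩
    have hz' : ⟪Aik, z⟫ ≤ bik := hz
    have h2 : ⟪Aik, y0⟫ ≤ ⟪Aik, y⟫ := hy0min hy
    simp only [inner_sub_right]
    linarith
end

section
/- Two-layer log-sum-exp approximation error: let h(x) = max_{k∈[p]} min_{l∈[q]} f_{k,l}(x) and define ĥ(x; b, κ) := (1/κ)·ln( Σ_{k∈[p]} 1 / (Σ_{l∈[q]} exp(−κ f_{k,l}(x))) ) − b/κ for κ > 0. Then h(x) − (ln q + b)/κ ≤ ĥ(x; b, κ) ≤ h(x) + (ln p − b)/κ for all x. In particular, if b ≥ ln p then ĥ(x; b, κ) ≤ h(x), and for fixed b, ĥ(x; b, κ) → h(x) as κ → ∞. -/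
theorem two_layer_log_sum_exp_approx {n p q : ℕ} (hp : 0 < p) (hq : 0 < q)
    (f : Fin p → Fin q → EuclideanSpace ℝ (Fin n) → ℝ) (b : ℝ) :
    let h : EuclideanSpace ℝ (Fin n) → ℝ := fun x =>
      Finset.univ.sup' ⟨⟨0, hp⟩, Finset.mem_univ _⟩ fun k =>
        Finset.univ.inf' ⟨⟨0, hq⟩, Finset.mem_univ _⟩ fun l => f k l x
    let hhat : ℝ → EuclideanSpace ℝ (Fin n) → ℝ := fun κ x =>
      (1 / κ) * Real.log (∑ k, 1 / ∑ l, Real.exp (-κ * f k l x)) - b / κ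
    (∀ κ > 0, ∀ x, h x - (Real.log q + b) / κ ≤ hhat κ x ∧
        hhat κ x ≤ h x + (Real.log p - b) / κ) ∧
      (Real.log p ≤ b → ∀ κ > 0, ∀ x, hhat κ x ≤ h x) ∧
      (∀ x, Filter.Tendsto (fun κ => hhat κ x) Filter.atTop (nhds (h x))) := by
  haveI : Nonempty (Fin p) := ⟨⟨0, hp⟩⟩
  haveI : Nonempty (Fin q) := ⟨⟨0, hq⟩⟩
  intro h hhat
  have hqpos : (0:ℝ) < q := by exact_mod_cast hq
  have hppos : (0:ℝ) < p := by exact_mod_cast hp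
  have main : ∀ κ > 0, ∀ x, h x - (Real.log q + b) / κ ≤ hhat κ x ∧
      hhat κ x ≤ h x + (Real.log p - b) / κ := by
    intro κ hκ x
    set S : ℝ := ∑ k, 1 / ∑ l, Real.exp (-κ * f k l x) with hSdef
    have hsum_pos : ∀ k : Fin p, (0:ℝ) < ∑ l, Real.exp (-κ * f k l x) := fun k =>
      Finset.sum_pos (fun l _ => Real.exp_pos _) Finset.univ_nonempty
    set m : Fin p → ℝ := fun k =>
      Finset.univ.inf' ⟨⟨0, hq⟩, Finset.mem_univ _⟩ fun l => f k l x with hm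
    -- upper bound on S
    have hterm_le : ∀ k : Fin p, 1 / ∑ l, Real.exp (-κ * f k l x) ≤ Real.exp (κ * h x) := by
      intro k
      obtain ⟨l0, -, hl0⟩ := Finset.exists_mem_eq_inf' (⟨⟨0, hq⟩, Finset.mem_univ _⟩ :
        (Finset.univ : Finset (Fin q)).Nonempty) fun l => f k l x
      have h1 : Real.exp (-κ * f k l0 x) ≤ ∑ l, Real.exp (-κ * f k l x) :=
        Finset.single_le_sum (f := fun l => Real.exp (-κ * f k l x))
          (fun l _ => (Real.exp_pos _).le) (Finset.mem_univ l0)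
      have h2 : 1 / ∑ l, Real.exp (-κ * f k l x) ≤ 1 / Real.exp (-κ * f k l0 x) :=
        one_div_le_one_div_of_le (Real.exp_pos _) h1
      have h3 : (1:ℝ) / Real.exp (-κ * f k l0 x) = Real.exp (κ * f k l0 x) := by
        rw [one_div, ← Real.exp_neg]; ring_nf
      have h4 : m k ≤ h x := Finset.le_sup' _ (Finset.mem_univ k)
      have h5 : f k l0 x ≤ h x := by rw [hm] at h4; simpa [← hl0] using h4
      calc 1 / ∑ l, Real.exp (-κ * f k l x) ≤ Real.exp (κ * f k l0 x) := by rw [← h3]; exact h2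
        _ ≤ Real.exp (κ * h x) := Real.exp_le_exp.mpr (by nlinarith)
    have hS_upper : S ≤ p * Real.exp (κ * h x) := by
      calc S ≤ ∑ _k : Fin p, Real.exp (κ * h x) :=
            Finset.sum_le_sum fun k _ => hterm_le k
        _ = p * Real.exp (κ * h x) := by simp [Finset.sum_const, mul_comm]
    -- lower bound on S
    have hex : ∃ k0 : Fin p, h x = m k0 := by
      obtain ⟨k0, -, hk0⟩ := Finset.exists_mem_eq_sup' (⟨⟨0, hp⟩, Finset.mem_univ _⟩ :
        (Finset.univ : Finset (Fin p)).Nonempty) fun k => m k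
      exact ⟨k0, hk0⟩
    obtain ⟨k0, hhk0⟩ := hex
    have hsum_le : ∑ l, Real.exp (-κ * f k0 l x) ≤ q * Real.exp (-κ * h x) := by
      calc ∑ l, Real.exp (-κ * f k0 l x) ≤ ∑ _l : Fin q, Real.exp (-κ * h x) := by
            apply Finset.sum_le_sum
            intro l _
            apply Real.exp_le_exp.mpr
            have : h x ≤ f k0 l x := by
              rw [hhk0]; exact Finset.inf'_le _ (Finset.mem_univ l)
            nlinarith
        _ = q * Real.exp (-κ * h x) := by simp [Finset.sum_const, mul_comm]
    have hS_lower : Real.exp (κ * h x) / q ≤ S := by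
      have h1 : Real.exp (κ * h x) / q ≤ 1 / ∑ l, Real.exp (-κ * f k0 l x) := by
        rw [div_le_div_iff₀ hqpos (hsum_pos k0)]
        have := hsum_le
        have he : Real.exp (κ * h x) * Real.exp (-κ * h x) = 1 := by
          rw [← Real.exp_add]; ring_nf; exact Real.exp_zero
        calc Real.exp (κ * h x) * ∑ l, Real.exp (-κ * f k0 l x)
            ≤ Real.exp (κ * h x) * (q * Real.exp (-κ * h x)) := by
              exact mul_le_mul_of_nonneg_left hsum_le (Real.exp_pos _).le
          _ = 1 * q := by rw [← mul_assoc, mul_comm (Real.exp (κ * h x)) (q:ℝ), mul_assoc, he]; ring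
      calc Real.exp (κ * h x) / q ≤ 1 / ∑ l, Real.exp (-κ * f k0 l x) := h1
        _ ≤ S := Finset.single_le_sum (f := fun k => 1 / ∑ l, Real.exp (-κ * f k l x))
            (fun k _ => by positivity) (Finset.mem_univ k0)
    have hSpos : 0 < S := lt_of_lt_of_le (by positivity) hS_lower
    -- log bounds
    have hlog1 : κ * h x - Real.log q ≤ Real.log S := by
      have := Real.log_le_log (by positivity) hS_lower
      rwa [Real.log_div (Real.exp_ne_zero _) (ne_of_gt hqpos), Real.log_exp] at this
    have hlog2 : Real.log S ≤ Real.log p + κ * h x := by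
      have := Real.log_le_log hSpos hS_upper
      rwa [Real.log_mul (ne_of_gt hppos) (Real.exp_ne_zero _), Real.log_exp] at this
    have hhat_eq : hhat κ x = (Real.log S - b) / κ := by
      show (1 / κ) * Real.log S - b / κ = _
      field_simp
    constructor
    · rw [hhat_eq]
      have : (κ * h x - Real.log q - b) / κ ≤ (Real.log S - b) / κ :=
        (div_le_div_iff_of_pos_right hκ).mpr (by linarith)
      calc h x - (Real.log q + b) / κ = (κ * h x - Real.log q - b) / κ := by
            field_simp; ring
        _ ≤ (Real.log S - b) / κ := this
    · rw [hhat_eq]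
      have : (Real.log S - b) / κ ≤ (Real.log p + κ * h x - b) / κ :=
        (div_le_div_iff_of_pos_right hκ).mpr (by linarith)
      calc (Real.log S - b) / κ ≤ (Real.log p + κ * h x - b) / κ := this
        _ = h x + (Real.log p - b) / κ := by field_simp; ring
  refine ⟨main, ?_, ?_⟩
  · intro hb κ hκ x
    have h2 := (main κ hκ x).2
    have h3 : (Real.log p - b) / κ ≤ 0 :=
      div_nonpos_of_nonpos_of_nonneg (by linarith) hκ.le
    exact h2.trans (by linarith)
  · intro x
    have t1 : Filter.Tendsto (fun κ : ℝ => h x - (Real.log q + b) / κ)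
        Filter.atTop (nhds (h x)) := by
      have : Filter.Tendsto (fun κ : ℝ => (Real.log q + b) / κ) Filter.atTop (nhds 0) :=
        Filter.Tendsto.div_atTop tendsto_const_nhds Filter.tendsto_id
      simpa using tendsto_const_nhds.sub this
    have t2 : Filter.Tendsto (fun κ : ℝ => h x + (Real.log p - b) / κ)
        Filter.atTop (nhds (h x)) := by
      have : Filter.Tendsto (fun κ : ℝ => (Real.log p - b) / κ) Filter.atTop (nhds 0) :=
        Filter.Tendsto.div_atTop tendsto_const_nhds Filter.tendsto_id
      simpa using tendsto_const_nhds.add this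
    apply tendsto_of_tendsto_of_tendsto_of_le_of_le' t1 t2
    · filter_upwards [Filter.eventually_gt_atTop 0] with κ hκ
      exact (main κ hκ x).1
    · filter_upwards [Filter.eventually_gt_atTop 0] with κ hκ
      exact (main κ hκ x).2
end
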